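/- Let n > 2k ≥ 2 be integers, -1 ≤ s ≤ 0, and k* = (k+1)(n+2sk)/(n-2k). If u ∈ C^1([0,R]) satisfies u(R) = 0, u'(r) ≥ 0 for 0 < r < R, then there is a constant C depending only on n, k, s such that (∫_0^R r^{n-1+2sk} |u(r)|^{k*} dr)^{1/k*} ≤ C (∫_0^R r^{n-k} [u'(r)]^{k+1} dr)^{1/(k+1)}. -/

import Mathlib

open MeasureTheory Set ENNReal

lemma tailBound (k : ℕ) (hk : 1 ≤ k) (m : ℝ) (hm : (k:ℝ) + 1 ≤ m)
    (R r : ℝ) (hr : 0 < r) (hrR : r < R) (u' : ℝ → ℝ)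
    (hc : ContinuousOn u' (Icc r R)) (hnn : ∀ t ∈ Ioo r R, 0 ≤ u' t) :
    ENNReal.ofReal (∫ t in r..R, u' t)
      ≤ ENNReal.ofReal (((k:ℝ)/(m - k)) ^ ((k:ℝ)/((k:ℝ)+1)))
        * (∫⁻ t in Ioo r R, ENNReal.ofReal (t ^ m * u' t ^ (k+1))) ^ (1/((k:ℝ)+1))
        * ENNReal.ofReal (r ^ (-(m - (k:ℝ))/((k:ℝ)+1))) := by
  have hk1 : (1:ℝ) ≤ (k:ℝ) := by exact_mod_cast hk
  have hkpos : (0:ℝ) < k := by linarith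
  have hppos : (0:ℝ) < (k:ℝ)+1 := by linarith
  have hmk : (0:ℝ) < m - k := by linarith
  have hmpos : (0:ℝ) < m := by linarith
  -- step 1 : interval integral to lintegral over Ioo
  have h1 : ENNReal.ofReal (∫ t in r..R, u' t)
      = ∫⁻ t in Ioo r R, ENNReal.ofReal (u' t) := by
    rw [intervalIntegral.integral_of_le hrR.le,
      ← setIntegral_congr_set (Ioo_ae_eq_Ioc (a := r) (b := R))]
    exact ofReal_integral_eq_lintegral_ofReal
      ((hc.integrableOn_Icc).mono_set Ioo_subset_Icc_self)
      ((ae_restrict_iff' measurableSet_Ioo).mpr (.of_forall hnn))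
  rw [h1]
  -- step 2 : split the integrand
  set p : ℝ := (k:ℝ)+1 with hp
  have hsplit : ∫⁻ t in Ioo r R, ENNReal.ofReal (u' t)
      = ∫⁻ t in Ioo r R,
          ((fun t => ENNReal.ofReal (t ^ (m/p) * u' t))
            * (fun t => ENNReal.ofReal (t ^ (-(m/p))))) t := by
    refine setLIntegral_congr_fun measurableSet_Ioo (fun t ht => ?_)
    have ht0 : 0 < t := hr.trans ht.1
    simp only [Pi.mul_apply]
    rw [← ENNReal.ofReal_mul (mul_nonneg (Real.rpow_nonneg ht0.le _) (hnn t ht))]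
    congr 1
    rw [Real.rpow_neg ht0.le]
    field_simp
  rw [hsplit]
  have hpq : Real.HolderConjugate p (p/(k:ℝ)) := by
    rw [Real.holderConjugate_iff]; constructor
    · simp only [hp]; linarith
    · rw [inv_div]; field_simp; rw [hp]; ring
  have hmeas1 : AEMeasurable (fun t => ENNReal.ofReal (t ^ (m/p) * u' t))
      (volume.restrict (Ioo r R)) := by
    apply (ENNReal.continuous_ofReal.comp_continuousOn _).aemeasurable measurableSet_Ioo
    exact ((continuousOn_id.rpow_const (fun x _ => Or.inr (by positivity))).mul
      (hc.mono Ioo_subset_Icc_self))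
  have hmeas2 : AEMeasurable (fun t : ℝ => ENNReal.ofReal (t ^ (-(m/p))))
      (volume.restrict (Ioo r R)) := by
    apply (ENNReal.continuous_ofReal.comp_continuousOn _).aemeasurable measurableSet_Ioo
    exact continuousOn_id.rpow_const (fun x hx => Or.inl (ne_of_gt (hr.trans hx.1)))
  refine le_trans (ENNReal.lintegral_mul_le_Lp_mul_Lq _ hpq hmeas1 hmeas2) ?_
  -- first factor
  have hF1 : (∫⁻ t in Ioo r R, ENNReal.ofReal (t ^ (m/p) * u' t) ^ p) ^ (1/p)
      = (∫⁻ t in Ioo r R, ENNReal.ofReal (t ^ m * u' t ^ (k+1))) ^ (1/p) := by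
    congr 1
    refine setLIntegral_congr_fun measurableSet_Ioo (fun t ht => ?_)
    have ht0 : 0 < t := hr.trans ht.1
    have hu0 : 0 ≤ u' t := hnn t ht
    rw [ENNReal.ofReal_rpow_of_nonneg (by positivity) (by positivity)]
    congr 1
    rw [Real.mul_rpow (by positivity) hu0, ← Real.rpow_natCast (u' t) (k+1),
      ← Real.rpow_mul ht0.le]
    congr 2
    · field_simp <;> ring
    · push_cast; ring
  -- second factor
  have hF2 : (∫⁻ t in Ioo r R, ENNReal.ofReal (t ^ (-(m/p))) ^ (p/(k:ℝ))) ^ (1/(p/(k:ℝ)))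
      ≤ (ENNReal.ofReal (((k:ℝ)/(m-k)) * r ^ (1 - m/(k:ℝ)))) ^ ((k:ℝ)/p) := by
    rw [one_div_div]
    refine ENNReal.rpow_le_rpow ?_ (by positivity)
    have h2 : ∫⁻ t in Ioo r R, ENNReal.ofReal (t ^ (-(m/p))) ^ (p/(k:ℝ))
        = ∫⁻ t in Ioo r R, ENNReal.ofReal (t ^ (-(m/(k:ℝ)))) := by
      refine setLIntegral_congr_fun measurableSet_Ioo (fun t ht => ?_)
      have ht0 : 0 < t := hr.trans ht.1
      rw [ENNReal.ofReal_rpow_of_nonneg (by positivity) (by positivity)]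
      congr 1
      rw [← Real.rpow_mul ht0.le]
      congr 1
      field_simp <;> ring
    rw [h2]
    have h3 : ∫⁻ t in Ioo r R, ENNReal.ofReal (t ^ (-(m/(k:ℝ))))
        = ENNReal.ofReal (∫ t in r..R, t ^ (-(m/(k:ℝ)))) := by
      rw [intervalIntegral.integral_of_le hrR.le,
        ← setIntegral_congr_set (Ioo_ae_eq_Ioc (a := r) (b := R)),
        ofReal_integral_eq_lintegral_ofReal]
      · exact ((ContinuousOn.integrableOn_Icc (continuousOn_id.rpow_const
          (fun x hx => Or.inl (ne_of_gt (lt_of_lt_of_le hr hx.1))))).mono_set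
          Ioo_subset_Icc_self)
      · exact (ae_restrict_iff' measurableSet_Ioo).mpr (.of_forall fun t ht =>
          Real.rpow_nonneg (le_of_lt (hr.trans ht.1)) _)
    rw [h3]
    apply ENNReal.ofReal_le_ofReal
    rw [integral_rpow (Or.inr ⟨by
        intro h
        have : m / (k:ℝ) = 1 := by linarith [neg_eq_iff_eq_neg.mp h]
        have : m = (k:ℝ) := by field_simp at this; linarith
        linarith, by
        rw [uIcc_of_le hrR.le]
        intro h0
        exact absurd h0.1 (not_le.mpr hr)⟩)]
    have he : -(m/(k:ℝ)) + 1 = 1 - m/(k:ℝ) := by ring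
    rw [he]
    have hex : 1 - m/(k:ℝ) < 0 := by
      rw [sub_neg]
      rw [lt_div_iff₀ hkpos]
      linarith
    have hR0 : (0:ℝ) ≤ R ^ (1 - m/(k:ℝ)) := Real.rpow_nonneg (by linarith) _
    rw [div_le_iff_of_neg hex]
    have hr0 : (0:ℝ) ≤ r ^ (1 - m/(k:ℝ)) := Real.rpow_nonneg hr.le _
    have hkm : (k:ℝ)/(m-k) * (1 - m/(k:ℝ)) = -1 := by field_simp <;> ring
    nlinarith [Real.rpow_nonneg hr.le (1 - m/(k:ℝ))]
  calc _ ≤ (∫⁻ t in Ioo r R, ENNReal.ofReal (t ^ m * u' t ^ (k+1))) ^ (1/p)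
        * (ENNReal.ofReal (((k:ℝ)/(m-k)) * r ^ (1 - m/(k:ℝ)))) ^ ((k:ℝ)/p) := by
        rw [← hF1]; exact mul_le_mul_right hF2 _
    _ = _ := by
        rw [ENNReal.ofReal_rpow_of_nonneg (by positivity) (by positivity),
          Real.mul_rpow (by positivity) (Real.rpow_nonneg hr.le _),
          ← Real.rpow_mul hr.le, ENNReal.ofReal_mul (by positivity)]
        have : (1 - m/(k:ℝ)) * ((k:ℝ)/p) = -(m - (k:ℝ))/p := by field_simp <;> ring
        rw [this]
        ring

set_option maxHeartbeats 2000000 in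
theorem stmt2 (n k : ℕ) (hk : 1 ≤ k) (hn : 2 * k < n) (s : ℝ) (hs1 : -1 ≤ s) (hs2 : s ≤ 0) :
    ∃ C : ℝ, 0 < C ∧ ∀ (R : ℝ), 0 < R → ∀ (u u' : ℝ → ℝ),
      (∀ r ∈ Set.Icc (0:ℝ) R, HasDerivAt u (u' r) r) →
      ContinuousOn u' (Set.Icc (0:ℝ) R) →
      u R = 0 → (∀ r ∈ Set.Ioo (0:ℝ) R, 0 ≤ u' r) →
      (∫ r in (0:ℝ)..R, r ^ ((n : ℝ) - 1 + 2 * s * k)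
          * |u r| ^ (((k : ℝ) + 1) * ((n : ℝ) + 2 * s * k) / ((n : ℝ) - 2 * k)))
            ^ (((n : ℝ) - 2 * k) / (((k : ℝ) + 1) * ((n : ℝ) + 2 * s * k)))
        ≤ C * (∫ r in (0:ℝ)..R, r ^ ((n : ℝ) - k) * (u' r) ^ (k + 1)) ^ (1 / ((k : ℝ) + 1)) := by
  have hk1 : (1:ℝ) ≤ (k:ℝ) := by exact_mod_cast hk
  have hkpos : (0:ℝ) < k := by linarith
  have hnR : 2*(k:ℝ) + 1 ≤ (n:ℝ) := by exact_mod_cast hn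
  obtain ⟨p, hp⟩ : ∃ p : ℝ, p = (k:ℝ) + 1 := ⟨_, rfl⟩
  obtain ⟨m, hm⟩ : ∃ m : ℝ, m = (n:ℝ) - (k:ℝ) := ⟨_, rfl⟩
  obtain ⟨a, ha⟩ : ∃ a : ℝ, a = (n:ℝ) - 1 + 2*s*(k:ℝ) := ⟨_, rfl⟩
  obtain ⟨q, hq⟩ : ∃ q : ℝ, q = ((k:ℝ) + 1) * ((n:ℝ) + 2*s*(k:ℝ)) / ((n:ℝ) - 2*(k:ℝ)) := ⟨_, rfl⟩
  have hn2k : (1:ℝ) ≤ (n:ℝ) - 2*(k:ℝ) := by linarith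
  have hnsk : (1:ℝ) ≤ (n:ℝ) + 2*s*(k:ℝ) := by nlinarith
  have hp2 : (2:ℝ) ≤ p := by rw [hp]; linarith
  have hp0 : (0:ℝ) < p := by linarith
  have ha0 : (0:ℝ) ≤ a := by rw [ha]; nlinarith
  have ha1 : a + 1 = (n:ℝ) + 2*s*(k:ℝ) := by rw [ha]; ring
  have ha1p : (0:ℝ) < a + 1 := by rw [ha1]; linarith
  have hmk : m - (k:ℝ) = (n:ℝ) - 2*(k:ℝ) := by rw [hm]; ring
  have hm1 : (k:ℝ) + 1 ≤ m := by rw [hm]; linarith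
  have hm0 : (0:ℝ) ≤ m := by linarith
  have hq0 : (0:ℝ) < q := by rw [hq]; positivity
  have hqp : p ≤ q := by
    rw [hq, ← hp]
    rw [mul_div_assoc]
    nlinarith [(one_le_div (by linarith : (0:ℝ) < (n:ℝ) - 2*(k:ℝ))).mpr
      (by nlinarith : (n:ℝ) - 2*(k:ℝ) ≤ (n:ℝ) + 2*s*(k:ℝ))]
  have hq1 : (1:ℝ) ≤ q := by linarith
  have hpne : p ≠ 0 := hp0.ne'
  have hqne : q ≠ 0 := hq0.ne'
  have hq2 : (2:ℝ) ≤ q := by linarith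
  obtain ⟨δ, hδ⟩ : ∃ δ : ℝ, δ = q/p - 1 := ⟨_, rfl⟩
  have hδ0 : (0:ℝ) ≤ δ := by
    rw [hδ, sub_nonneg, le_div_iff₀ hp0, one_mul]; exact hqp
  obtain ⟨CK, hCK⟩ : ∃ CK : ℝ, CK = ((k:ℝ)/(m - (k:ℝ))) ^ ((k:ℝ)/p) := ⟨_, rfl⟩
  have hCK0 : 0 < CK := by
    rw [hCK]; exact Real.rpow_pos_of_pos (by rw [hmk]; positivity) _
  -- key exponent identities
  have hqpq : q = p * ((n:ℝ) + 2*s*(k:ℝ)) / ((n:ℝ) - 2*(k:ℝ)) := by rw [hq, hp]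
  have hδ1 : δ + 1 = q / p := by rw [hδ]; ring
  have hγ : a + 1 - m/p - (k:ℝ)*a/p = δ * ((m - (k:ℝ))/p) := by
    rw [hδ, hqpq, hp, hm, ha]
    have h1 : (n:ℝ) - 2*(k:ℝ) ≠ 0 := by linarith
    have h2 : (k:ℝ) + 1 ≠ 0 := by linarith
    field_simp
    ring
  refine ⟨(q/(a+1) * CK ^ δ) ^ (p/q), Real.rpow_pos_of_pos
    (mul_pos (div_pos hq0 ha1p) (Real.rpow_pos_of_pos hCK0 _)) _, ?_⟩
  intro R hR u u' hders hcont huR hmono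
  -- continuity of u
  have hcu : ContinuousOn u (Icc 0 R) := fun r hr => (hders r hr).continuousAt.continuousWithinAt
  have hcnu : ContinuousOn (fun r => -u r) (Icc 0 R) := hcu.neg
  -- FTC
  have hFTC : ∀ r ∈ Icc (0:ℝ) R, ∫ t in r..R, u' t = -u r := by
    intro r hr
    have h := intervalIntegral.integral_eq_sub_of_hasDerivAt (f := u) (f' := u') (a := r) (b := R)
      (by
        intro t ht
        rw [uIcc_of_le hr.2] at ht
        exact hders t ⟨hr.1.trans ht.1, ht.2⟩)
      (by
        apply ContinuousOn.intervalIntegrable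
        rw [uIcc_of_le hr.2]
        exact hcont.mono (Icc_subset_Icc hr.1 le_rfl))
    rw [h, huR, zero_sub]
  -- u is nonpositive
  have hun : ∀ r ∈ Icc (0:ℝ) R, 0 ≤ -u r := by
    intro r hr
    rw [← hFTC r hr, intervalIntegral.integral_of_le hr.2,
      ← setIntegral_congr_set (Ioo_ae_eq_Ioc (a := r) (b := R))]
    exact setIntegral_nonneg measurableSet_Ioo
      (fun t ht => hmono t ⟨lt_of_le_of_lt hr.1 ht.1, ht.2⟩)
  -- rewrite the goal
  rw [← hq, ← hm, ← ha, ← hp]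
  have he0 : ((n:ℝ) - 2*(k:ℝ)) / (p * ((n:ℝ) + 2*s*(k:ℝ))) = 1/q := by
    rw [hqpq, one_div_div]
  rw [he0]
  have hIcongr : (∫ r in (0:ℝ)..R, r ^ a * |u r| ^ q)
      = ∫ r in (0:ℝ)..R, r ^ a * (-u r) ^ q := by
    apply intervalIntegral.integral_congr
    intro r hr
    rw [uIcc_of_le hR.le] at hr
    simp only
    rw [abs_of_nonpos (by linarith [hun r hr])]
  rw [hIcongr]
  set Ir := ∫ r in (0:ℝ)..R, r ^ a * (-u r) ^ q with hIrdef
  set Er := ∫ r in (0:ℝ)..R, r ^ m * u' r ^ (k+1) with hErdef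
  -- continuity of the integrands
  have hrp : ∀ e:ℝ, 0 ≤ e → ContinuousOn (fun t:ℝ => t ^ e) (Icc 0 R) :=
    fun e he => continuousOn_id.rpow_const fun x _ => Or.inr he
  have hnup : ∀ e:ℝ, 0 ≤ e → ContinuousOn (fun t => (-u t) ^ e) (Icc 0 R) :=
    fun e he => hcnu.rpow_const fun x _ => Or.inr he
  have hcE : ContinuousOn (fun t:ℝ => t ^ m * u' t ^ (k+1)) (Icc 0 R) :=
    (hrp m hm0).mul (hcont.pow _)
  have hcI : ContinuousOn (fun t:ℝ => t ^ a * (-u t) ^ q) (Icc 0 R) :=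
    (hrp a ha0).mul (hnup q (by linarith))
  have hcJ : ContinuousOn (fun t:ℝ => t ^ (a+1) * ((-u t) ^ (q-1) * u' t)) (Icc 0 R) :=
    (hrp (a+1) (by linarith)).mul ((hnup (q-1) (by linarith)).mul hcont)
  -- lintegral versions
  obtain ⟨El, hEl⟩ : ∃ x, x = ∫⁻ t in Ioo (0:ℝ) R, ENNReal.ofReal (t ^ m * u' t ^ (k+1)) := ⟨_, rfl⟩
  obtain ⟨Il, hIl⟩ : ∃ x, x = ∫⁻ t in Ioo (0:ℝ) R, ENNReal.ofReal (t ^ a * (-u t) ^ q) := ⟨_, rfl⟩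
  obtain ⟨Jl, hJl⟩ : ∃ x, x = ∫⁻ t in Ioo (0:ℝ) R,
      ENNReal.ofReal (t ^ (a+1) * ((-u t) ^ (q-1) * u' t)) := ⟨_, rfl⟩
  have hEeq : ENNReal.ofReal Er = El := by
    rw [hEl, hErdef, intervalIntegral.integral_of_le hR.le,
      ← setIntegral_congr_set (Ioo_ae_eq_Ioc (a := (0:ℝ)) (b := R))]
    exact ofReal_integral_eq_lintegral_ofReal (hcE.integrableOn_Icc.mono_set Ioo_subset_Icc_self)
      ((ae_restrict_iff' measurableSet_Ioo).mpr (.of_forall fun t ht =>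
        mul_nonneg (Real.rpow_nonneg ht.1.le _) (pow_nonneg (hmono t ht) _)))
  have hIeq : ENNReal.ofReal Ir = Il := by
    rw [hIl, hIrdef, intervalIntegral.integral_of_le hR.le,
      ← setIntegral_congr_set (Ioo_ae_eq_Ioc (a := (0:ℝ)) (b := R))]
    exact ofReal_integral_eq_lintegral_ofReal (hcI.integrableOn_Icc.mono_set Ioo_subset_Icc_self)
      ((ae_restrict_iff' measurableSet_Ioo).mpr (.of_forall fun t ht =>
        mul_nonneg (Real.rpow_nonneg ht.1.le _)
          (Real.rpow_nonneg (hun t ⟨ht.1.le, ht.2.le⟩) _)))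
  have hJeq : ENNReal.ofReal (∫ r in (0:ℝ)..R, r ^ (a+1) * ((-u r) ^ (q-1) * u' r)) = Jl := by
    rw [hJl, intervalIntegral.integral_of_le hR.le,
      ← setIntegral_congr_set (Ioo_ae_eq_Ioc (a := (0:ℝ)) (b := R))]
    exact ofReal_integral_eq_lintegral_ofReal (hcJ.integrableOn_Icc.mono_set Ioo_subset_Icc_self)
      ((ae_restrict_iff' measurableSet_Ioo).mpr (.of_forall fun t ht =>
        mul_nonneg (Real.rpow_nonneg ht.1.le _)
          (mul_nonneg (Real.rpow_nonneg (hun t ⟨ht.1.le, ht.2.le⟩) _) (hmono t ht))))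
  have hEltop : El ≠ ⊤ := by rw [← hEeq]; exact ENNReal.ofReal_ne_top
  have hEr0 : 0 ≤ Er := by
    rw [hErdef, intervalIntegral.integral_of_le hR.le,
      ← setIntegral_congr_set (Ioo_ae_eq_Ioc (a := (0:ℝ)) (b := R))]
    exact setIntegral_nonneg measurableSet_Ioo (fun t ht =>
      mul_nonneg (Real.rpow_nonneg ht.1.le _) (pow_nonneg (hmono t ht) _))
  have hIr0 : 0 ≤ Ir := by
    rw [hIrdef, intervalIntegral.integral_of_le hR.le,
      ← setIntegral_congr_set (Ioo_ae_eq_Ioc (a := (0:ℝ)) (b := R))]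
    exact setIntegral_nonneg measurableSet_Ioo (fun t ht =>
      mul_nonneg (Real.rpow_nonneg ht.1.le _)
        (Real.rpow_nonneg (hun t ⟨ht.1.le, ht.2.le⟩) _))
  -- pointwise bound
  have hpt : ∀ t ∈ Ioo (0:ℝ) R, ENNReal.ofReal (-u t)
      ≤ ENNReal.ofReal CK * El ^ (1/p) * ENNReal.ofReal (t ^ (-(m - (k:ℝ))/p)) := by
    intro t ht
    have h := tailBound k hk m hm1 R t ht.1 ht.2 u'
      (hcont.mono (Icc_subset_Icc ht.1.le le_rfl))
      (fun x hx => hmono x ⟨ht.1.trans hx.1, hx.2⟩)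
    rw [hFTC t ⟨ht.1.le, ht.2.le⟩, ← hp, ← hCK] at h
    refine h.trans ?_
    refine mul_le_mul_left (mul_le_mul_right ?_ _) _
    refine ENNReal.rpow_le_rpow ?_ (by positivity)
    rw [hEl]
    exact lintegral_mono_set (Ioo_subset_Ioo_left ht.1.le)
  -- conjugate exponents
  have hpq : Real.HolderConjugate p (p/(k:ℝ)) := by
    rw [Real.holderConjugate_iff]; constructor
    · rw [hp]; linarith
    · rw [inv_div, hp]; field_simp <;> ring
  -- measurability
  have hmF1 : AEMeasurable (fun t => ENNReal.ofReal (t ^ (m/p) * u' t))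
      (volume.restrict (Ioo (0:ℝ) R)) := by
    apply (ENNReal.continuous_ofReal.comp_continuousOn _).aemeasurable measurableSet_Ioo
    exact (continuousOn_id.rpow_const (fun x _ => Or.inr (div_nonneg hm0 hp0.le))).mul
      (hcont.mono Ioo_subset_Icc_self)
  have hmF2 : AEMeasurable (fun t => ENNReal.ofReal
      (t ^ ((k:ℝ)*a/p) * (-u t) ^ ((k:ℝ)*q/p))) (volume.restrict (Ioo (0:ℝ) R)) := by
    apply (ENNReal.continuous_ofReal.comp_continuousOn _).aemeasurable measurableSet_Ioo
    exact (continuousOn_id.rpow_const (fun x _ => Or.inr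
        (div_nonneg (mul_nonneg hkpos.le ha0) hp0.le))).mul
      ((hcnu.mono Ioo_subset_Icc_self).rpow_const (fun x _ => Or.inr
        (div_nonneg (mul_nonneg hkpos.le hq0.le) hp0.le)))
  -- Hoelder
  have hHold : ∫⁻ t in Ioo (0:ℝ) R, ENNReal.ofReal (t ^ (m/p) * u' t)
        * ENNReal.ofReal (t ^ ((k:ℝ)*a/p) * (-u t) ^ ((k:ℝ)*q/p))
      ≤ El ^ (1/p) * Il ^ ((k:ℝ)/p) := by
    have h := ENNReal.lintegral_mul_le_Lp_mul_Lq (volume.restrict (Ioo (0:ℝ) R)) hpq hmF1 hmF2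
    simp only [Pi.mul_apply] at h
    refine h.trans (le_of_eq ?_)
    have e1 : ∫⁻ t in Ioo (0:ℝ) R, ENNReal.ofReal (t ^ (m/p) * u' t) ^ p = El := by
      rw [hEl]
      refine setLIntegral_congr_fun measurableSet_Ioo (fun t ht => ?_)
      have ht0 : 0 < t := ht.1
      have hu0 : 0 ≤ u' t := hmono t ht
      rw [ENNReal.ofReal_rpow_of_nonneg (mul_nonneg (Real.rpow_nonneg ht0.le _) hu0) hp0.le]
      congr 1
      rw [Real.mul_rpow (Real.rpow_nonneg ht0.le _) hu0, ← Real.rpow_mul ht0.le]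
      congr 1
      · congr 1; field_simp
      · rw [hp, show ((k:ℝ)+1) = ((k+1 : ℕ):ℝ) by push_cast; ring, Real.rpow_natCast]
    have e2 : ∫⁻ t in Ioo (0:ℝ) R, ENNReal.ofReal
        (t ^ ((k:ℝ)*a/p) * (-u t) ^ ((k:ℝ)*q/p)) ^ (p/(k:ℝ)) = Il := by
      rw [hIl]
      refine setLIntegral_congr_fun measurableSet_Ioo (fun t ht => ?_)
      have ht0 : 0 < t := ht.1
      have hu0 : 0 ≤ -u t := hun t ⟨ht.1.le, ht.2.le⟩
      rw [ENNReal.ofReal_rpow_of_nonneg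
        (mul_nonneg (Real.rpow_nonneg ht0.le _) (Real.rpow_nonneg hu0 _))
        (div_nonneg hp0.le hkpos.le)]
      congr 1
      rw [Real.mul_rpow (Real.rpow_nonneg ht0.le _) (Real.rpow_nonneg hu0 _),
        ← Real.rpow_mul ht0.le, ← Real.rpow_mul hu0]
      congr 2
      · field_simp
      · field_simp
    rw [e1, e2, one_div_div]
  -- pointwise for the J integrand
  have hD3top : (ENNReal.ofReal CK)^δ * El^(δ/p) ≠ ⊤ :=
    ENNReal.mul_ne_top (ENNReal.rpow_ne_top_of_nonneg hδ0 ENNReal.ofReal_ne_top)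
      (ENNReal.rpow_ne_top_of_nonneg (div_nonneg hδ0 hp0.le) hEltop)
  have hptJ : ∀ t ∈ Ioo (0:ℝ) R, ENNReal.ofReal (t ^ (a+1) * ((-u t) ^ (q-1) * u' t))
      ≤ (ENNReal.ofReal (t ^ (m/p) * u' t)
          * ENNReal.ofReal (t ^ ((k:ℝ)*a/p) * (-u t) ^ ((k:ℝ)*q/p)))
        * ((ENNReal.ofReal CK)^δ * El^(δ/p)) := by
    intro t ht
    have ht0 : 0 < t := ht.1
    have hu0 : 0 ≤ -u t := hun t ⟨ht.1.le, ht.2.le⟩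
    have hu'0 : 0 ≤ u' t := hmono t ht
    have hsplitR : t ^ (a+1) * ((-u t) ^ (q-1) * u' t)
        = (t ^ (m/p) * u' t) * (t ^ ((k:ℝ)*a/p) * (-u t) ^ ((k:ℝ)*q/p))
          * (t ^ (δ*((m - (k:ℝ))/p)) * (-u t) ^ δ) := by
      have hqe : q - 1 = (k:ℝ)*q/p + δ := by rw [hδ, hp]; field_simp <;> ring
      have hae : a + 1 = m/p + (k:ℝ)*a/p + δ*((m - (k:ℝ))/p) := by rw [← hγ]; ring
      rw [hqe, Real.rpow_add_of_nonneg hu0 (div_nonneg (mul_nonneg hkpos.le hq0.le) hp0.le) hδ0]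
      nth_rewrite 1 [hae]
      rw [Real.rpow_add ht0, Real.rpow_add ht0]
      ring
    rw [hsplitR, ENNReal.ofReal_mul (mul_nonneg (mul_nonneg (Real.rpow_nonneg ht0.le _) hu'0)
        (mul_nonneg (Real.rpow_nonneg ht0.le _) (Real.rpow_nonneg hu0 _))),
      ENNReal.ofReal_mul (mul_nonneg (Real.rpow_nonneg ht0.le _) hu'0)]
    refine mul_le_mul_right ?_ _
    rw [ENNReal.ofReal_mul (Real.rpow_nonneg ht0.le _),
      ← ENNReal.ofReal_rpow_of_nonneg hu0 hδ0]
    calc ENNReal.ofReal (t ^ (δ*((m - (k:ℝ))/p))) * ENNReal.ofReal (-u t) ^ δ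
        ≤ ENNReal.ofReal (t ^ (δ*((m - (k:ℝ))/p)))
          * (ENNReal.ofReal CK * El ^ (1/p) * ENNReal.ofReal (t ^ (-(m - (k:ℝ))/p))) ^ δ :=
        mul_le_mul_right (ENNReal.rpow_le_rpow (hpt t ht) hδ0) _
      _ = ENNReal.ofReal (t ^ (δ*((m - (k:ℝ))/p)))
            * ENNReal.ofReal (t ^ (-(m - (k:ℝ))/p)) ^ δ
            * ((ENNReal.ofReal CK) ^ δ * El ^ ((1/p)*δ)) := by
          rw [ENNReal.mul_rpow_of_nonneg _ _ hδ0, ENNReal.mul_rpow_of_nonneg _ _ hδ0,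
            ← ENNReal.rpow_mul]
          ring
      _ = (ENNReal.ofReal CK)^δ * El^(δ/p) := by
          rw [ENNReal.ofReal_rpow_of_nonneg (Real.rpow_nonneg ht0.le _) hδ0,
            ← Real.rpow_mul ht0.le,
            ← ENNReal.ofReal_mul (Real.rpow_nonneg ht0.le _),
            ← Real.rpow_add ht0,
            show δ*((m - (k:ℝ))/p) + -(m - (k:ℝ))/p*δ = 0 by ring,
            Real.rpow_zero, ENNReal.ofReal_one, one_mul,
            show (1/p)*δ = δ/p by ring]
  -- bound Jl
  have hJle : Jl ≤ ((ENNReal.ofReal CK)^δ * El^(δ/p)) * (El ^ (1/p) * Il ^ ((k:ℝ)/p)) := by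
    rw [hJl]
    calc ∫⁻ t in Ioo (0:ℝ) R, ENNReal.ofReal (t ^ (a+1) * ((-u t) ^ (q-1) * u' t))
        ≤ ∫⁻ t in Ioo (0:ℝ) R, (ENNReal.ofReal (t ^ (m/p) * u' t)
            * ENNReal.ofReal (t ^ ((k:ℝ)*a/p) * (-u t) ^ ((k:ℝ)*q/p)))
          * ((ENNReal.ofReal CK)^δ * El^(δ/p)) :=
        lintegral_mono_ae ((ae_restrict_iff' measurableSet_Ioo).mpr (.of_forall hptJ))
      _ = (∫⁻ t in Ioo (0:ℝ) R, ENNReal.ofReal (t ^ (m/p) * u' t)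
            * ENNReal.ofReal (t ^ ((k:ℝ)*a/p) * (-u t) ^ ((k:ℝ)*q/p)))
          * ((ENNReal.ofReal CK)^δ * El^(δ/p)) := lintegral_mul_const' _ _ hD3top
      _ ≤ ((ENNReal.ofReal CK)^δ * El^(δ/p)) * (El ^ (1/p) * Il ^ ((k:ℝ)/p)) := by
          rw [mul_comm]; exact mul_le_mul_right hHold _
  -- integration by parts
  have hf1int : IntervalIntegrable (fun r => r ^ a * (-u r) ^ q) volume 0 R :=
    ContinuousOn.intervalIntegrable (by rw [uIcc_of_le hR.le]; exact hcI)
  have hf2int : IntervalIntegrable (fun r => r ^ (a+1) * ((-u r) ^ (q-1) * u' r)) volume 0 R :=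
    ContinuousOn.intervalIntegrable (by rw [uIcc_of_le hR.le]; exact hcJ)
  have hIBP : (a+1) * Ir = q * (∫ r in (0:ℝ)..R, r ^ (a+1) * ((-u r) ^ (q-1) * u' r)) := by
    have hG : ∀ x ∈ uIcc (0:ℝ) R, HasDerivAt (fun r => r ^ (a+1) * (-u r) ^ q)
        ((a+1) * (x ^ a * (-u x) ^ q) - q * (x ^ (a+1) * ((-u x) ^ (q-1) * u' x))) x := by
      intro x hx
      rw [uIcc_of_le hR.le] at hx
      have hd1 : HasDerivAt (fun y:ℝ => y ^ (a+1)) ((a+1) * x ^ a) x := by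
        have := Real.hasDerivAt_rpow_const (x := x) (p := a+1) (Or.inr (by linarith))
        simpa [add_sub_cancel_right] using this
      have hd2 : HasDerivAt (fun y => (-u y) ^ q) (q * (-u x) ^ (q-1) * -u' x) x := by
        have hg := Real.hasDerivAt_rpow_const (x := -u x) (p := q) (Or.inr hq1)
        have := hg.comp x ((hders x hx).neg)
        exact this
      have := hd1.mul hd2
      exact this.congr_deriv (by ring)
    have hFTCG := intervalIntegral.integral_eq_sub_of_hasDerivAt hG (by
      apply ContinuousOn.intervalIntegrable
      rw [uIcc_of_le hR.le]
      exact (continuousOn_const.mul hcI).sub (continuousOn_const.mul hcJ))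
    rw [intervalIntegral.integral_sub (hf1int.const_mul _) (hf2int.const_mul _),
      intervalIntegral.integral_const_mul, intervalIntegral.integral_const_mul] at hFTCG
    have hGR : R ^ (a+1) * (-u R) ^ q = 0 := by
      rw [huR, neg_zero, Real.zero_rpow hq0.ne', mul_zero]
    have hG0 : (0:ℝ) ^ (a+1) * (-u 0) ^ q = 0 := by
      rw [Real.zero_rpow (by linarith), zero_mul]
    rw [hGR, hG0, sub_zero] at hFTCG
    rw [← hIrdef] at hFTCG
    linarith [hFTCG]
  have hIr_eq : Ir = q/(a+1) * (∫ r in (0:ℝ)..R, r ^ (a+1) * ((-u r) ^ (q-1) * u' r)) := by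
    rw [div_mul_eq_mul_div, eq_div_iff ha1p.ne']
    linarith [hIBP]
  have hIJ : ENNReal.ofReal Ir = ENNReal.ofReal (q/(a+1)) * Jl := by
    rw [hIr_eq, ENNReal.ofReal_mul (div_nonneg hq0.le ha1p.le), hJeq]
  -- absorption
  by_cases hIr0' : Ir = 0
  · rw [hIr0', Real.zero_rpow (one_div_ne_zero hq0.ne')]
    exact mul_nonneg (Real.rpow_pos_of_pos
      (mul_pos (div_pos hq0 ha1p) (Real.rpow_pos_of_pos hCK0 _)) _).le
      (Real.rpow_nonneg hEr0 _)
  have hIrpos : 0 < Ir := lt_of_le_of_ne hIr0 (Ne.symm hIr0')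
  have hIlne : ENNReal.ofReal Ir ≠ 0 := (ENNReal.ofReal_pos.mpr hIrpos).ne'
  have hchain : ENNReal.ofReal Ir
      ≤ (ENNReal.ofReal (q/(a+1)) * (ENNReal.ofReal CK)^δ * El^((δ+1)/p))
        * (ENNReal.ofReal Ir) ^ ((k:ℝ)/p) := by
    calc ENNReal.ofReal Ir = ENNReal.ofReal (q/(a+1)) * Jl := hIJ
      _ ≤ ENNReal.ofReal (q/(a+1))
          * (((ENNReal.ofReal CK)^δ * El^(δ/p)) * (El ^ (1/p) * Il ^ ((k:ℝ)/p))) :=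
        mul_le_mul_right hJle _
      _ = (ENNReal.ofReal (q/(a+1)) * (ENNReal.ofReal CK)^δ * El^((δ+1)/p))
          * Il ^ ((k:ℝ)/p) := by
          rw [show (δ+1)/p = δ/p + 1/p by ring,
            ENNReal.rpow_add_of_nonneg _ _ (div_nonneg hδ0 hp0.le) (by positivity)]
          ring
      _ = _ := by rw [hIeq]
  obtain ⟨X, hX⟩ : ∃ x, x = ENNReal.ofReal (q/(a+1)) * (ENNReal.ofReal CK)^δ * El^((δ+1)/p) :=
    ⟨_, rfl⟩
  rw [← hX] at hchain
  have h5 : (ENNReal.ofReal Ir) ^ (1/p) ≤ X := by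
    have h6 : (1:ℝ)/p = 1 - (k:ℝ)/p := by rw [hp]; field_simp; ring
    rw [h6, ENNReal.rpow_sub _ _ hIlne ENNReal.ofReal_ne_top, ENNReal.rpow_one]
    exact ENNReal.div_le_of_le_mul hchain
  have h7 : (ENNReal.ofReal Ir) ^ (1/q) ≤ X ^ (p/q) := by
    have h8 := ENNReal.rpow_le_rpow h5 (le_of_lt (div_pos hp0 hq0))
    rwa [← ENNReal.rpow_mul, show (1/p)*(p/q) = 1/q by field_simp] at h8
  have hXval : X ^ (p/q) = ENNReal.ofReal ((q/(a+1) * CK ^ δ) ^ (p/q)) * El ^ (1/p) := by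
    have hX2 : X = ENNReal.ofReal (q/(a+1) * CK ^ δ) * El^((δ+1)/p) := by
      rw [hX, ENNReal.ofReal_mul (div_nonneg hq0.le ha1p.le),
        ENNReal.ofReal_rpow_of_nonneg hCK0.le hδ0]
    rw [hX2, ENNReal.mul_rpow_of_nonneg _ _ (le_of_lt (div_pos hp0 hq0)),
      ← ENNReal.rpow_mul,
      ENNReal.ofReal_rpow_of_nonneg (mul_nonneg (div_nonneg hq0.le ha1p.le)
        (Real.rpow_nonneg hCK0.le _)) (le_of_lt (div_pos hp0 hq0)),
      show (δ+1)/p*(p/q) = 1/p by rw [hδ1]; field_simp]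
  have hfinal : ENNReal.ofReal (Ir ^ (1/q))
      ≤ ENNReal.ofReal ((q/(a+1) * CK ^ δ) ^ (p/q) * Er ^ (1/p)) := by
    rw [← ENNReal.ofReal_rpow_of_nonneg hIr0 (by positivity)]
    refine (h7.trans (le_of_eq hXval)).trans (le_of_eq ?_)
    rw [← hEeq, ENNReal.ofReal_rpow_of_nonneg hEr0 (by positivity),
      ← ENNReal.ofReal_mul (Real.rpow_nonneg (mul_nonneg (div_nonneg hq0.le ha1p.le)
        (Real.rpow_nonneg hCK0.le _)) _)]
  exact (ENNReal.ofReal_le_ofReal_iff (mul_nonneg (Real.rpow_nonneg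
    (mul_nonneg (div_nonneg hq0.le ha1p.le) (Real.rpow_nonneg hCK0.le _)) _)
    (Real.rpow_nonneg hEr0 _))).mp hfinal
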